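/- f_{2,3}(n) is odd for infinitely many n. -/

import Mathlib

open Filter Real

/-- Number of representations of `n` as a sum of distinct terms of the form `p^a * q^b`. -/
noncomputable def fpq (p q n : ℕ) : ℕ :=
  Set.ncard {S : Finset ℕ | (∀ k ∈ S, ∃ a b : ℕ, k = p ^ a * q ^ b) ∧ S.sum id = n}

instance smoothDec : DecidablePred (fun k : ℕ => ∃ a b : ℕ, k = 2 ^ a * 3 ^ b) := fun k =>
  decidable_of_iff (∃ a < k + 1, ∃ b < k + 1, k = 2 ^ a * 3 ^ b)
    (by
      constructor
      · rintro ⟨a, _, b, _, h⟩; exact ⟨a, b, h⟩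
      · rintro ⟨a, b, rfl⟩
        have ha : a < 2 ^ a := Nat.lt_two_pow_self
        have hb : b < 3 ^ b := Nat.lt_pow_self (by norm_num)
        have h2 : 2 ^ a ≤ 2 ^ a * 3 ^ b := Nat.le_mul_of_pos_right _ (by positivity)
        have h3 : 3 ^ b ≤ 2 ^ a * 3 ^ b := Nat.le_mul_of_pos_left _ (by positivity)
        exact ⟨a, by omega, b, by omega, rfl⟩)

/-- The finset of representations of `n`. -/
def REP (n : ℕ) : Finset (Finset ℕ) :=
  (Finset.range (n + 1)).powerset.filter
    (fun S => (∀ k ∈ S, ∃ a b : ℕ, k = 2 ^ a * 3 ^ b) ∧ S.sum id = n)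

lemma mem_REP {n : ℕ} {S : Finset ℕ} :
    S ∈ REP n ↔ (∀ k ∈ S, ∃ a b : ℕ, k = 2 ^ a * 3 ^ b) ∧ S.sum id = n := by
  simp only [REP, Finset.mem_filter, Finset.mem_powerset]
  constructor
  · exact fun h => h.2
  · intro h
    refine ⟨fun k hk => Finset.mem_range.2 (Nat.lt_succ_of_le ?_), h⟩
    calc k = id k := rfl
      _ ≤ S.sum id := Finset.single_le_sum (fun i _ => Nat.zero_le (id i)) hk
      _ = n := h.2

lemma fpq_eq (n : ℕ) : fpq 2 3 n = (REP n).card := by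
  rw [fpq, ← Set.ncard_coe_finset]
  congr 1
  ext S
  rw [Finset.mem_coe, mem_REP, Set.mem_setOf_eq]

/-- A finset of powers of two is recovered from its sum by binary expansion. -/
lemma pow2_finset_eq {A : Finset ℕ} (h : ∀ k ∈ A, ∃ a, k = 2 ^ a) :
    ((A.sum id).bitIndices.toFinset).image (2 ^ ·) = A := by
  have hinj : ∀ x ∈ A, ∀ y ∈ A, Nat.log 2 x = Nat.log 2 y → x = y := by
    intro x hx y hy hxy
    obtain ⟨a, rfl⟩ := h x hx
    obtain ⟨b, rfl⟩ := h y hy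
    rw [Nat.log_pow (by norm_num), Nat.log_pow (by norm_num)] at hxy
    rw [hxy]
  have hsum : ∑ i ∈ A.image (Nat.log 2), 2 ^ i = A.sum id := by
    rw [Finset.sum_image hinj]
    refine Finset.sum_congr rfl (fun x hx => ?_)
    obtain ⟨a, rfl⟩ := h x hx
    rw [Nat.log_pow (by norm_num)]; rfl
  have hbit : (A.sum id).bitIndices.toFinset = A.image (Nat.log 2) := by
    rw [← hsum, Finset.toFinset_bitIndices_twoPowSum]
  rw [hbit, Finset.image_image]
  have : A.image ((2 ^ ·) ∘ Nat.log 2) = A.image id := by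
    refine Finset.image_congr (fun x hx => ?_)
    obtain ⟨a, rfl⟩ := h x hx
    simp [Nat.log_pow (by norm_num : 1 < 2)]
  rw [this, Finset.image_id]

lemma not_three_dvd_two_pow (a : ℕ) : ¬ (3 ∣ 2 ^ a) := by
  intro h
  have := (Nat.prime_three.dvd_of_dvd_pow h)
  omega

/-- smooth and not divisible by 3 means a power of 2 -/
lemma smooth_not_dvd_pow2 {k : ℕ} (h : ∃ a b : ℕ, k = 2 ^ a * 3 ^ b) (h3 : ¬ 3 ∣ k) :
    ∃ a, k = 2 ^ a := by
  obtain ⟨a, b, rfl⟩ := h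
  rcases Nat.eq_zero_or_pos b with hb | hb
  · exact ⟨a, by rw [hb, pow_zero, mul_one]⟩
  · exfalso
    exact h3 ⟨2 ^ a * 3 ^ (b - 1), by rw [mul_comm 3 _, mul_assoc, ← pow_succ]; congr 2; omega⟩

/-- The fiber statistic: one third of the sum of the multiples of 3. -/
def keyF (S : Finset ℕ) : ℕ := ((S.filter (fun k => 3 ∣ k)).image (fun k => k / 3)).sum id

/-- The key recurrence. -/
lemma REP_card_rec (n : ℕ) :
    (REP n).card = ∑ m ∈ Finset.range (n / 3 + 1), (REP m).card := by
  classical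
  have hdivinj : ∀ S : Finset ℕ, ∀ x ∈ S.filter (fun k => 3 ∣ k),
      ∀ y ∈ S.filter (fun k => 3 ∣ k), x / 3 = y / 3 → x = y := by
    intro S x hx y hy hxy
    rw [Finset.mem_filter] at hx hy
    have h1 := Nat.div_mul_cancel hx.2
    have h2 := Nat.div_mul_cancel hy.2
    omega
  -- key S equals one third of the sum of multiples of 3 in S
  have hkey3 : ∀ S : Finset ℕ, 3 * keyF S = (S.filter (fun k => 3 ∣ k)).sum id := by
    intro S
    unfold keyF
    rw [Finset.sum_image (hdivinj S), Finset.mul_sum]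
    refine Finset.sum_congr rfl (fun x hx => ?_)
    rw [Finset.mem_filter] at hx
    exact Nat.mul_div_cancel' hx.2
  have hmaps : ∀ S ∈ REP n, keyF S ∈ Finset.range (n / 3 + 1) := by
    intro S hS
    rw [mem_REP] at hS
    have h1 : (S.filter (fun k => 3 ∣ k)).sum id ≤ S.sum id :=
      Finset.sum_le_sum_of_subset (Finset.filter_subset _ _)
    have h2 : 3 * keyF S ≤ n := by rw [hkey3 S]; omega
    exact Finset.mem_range.2 (by omega)
  rw [Finset.card_eq_sum_card_fiberwise (f := keyF) hmaps]
  refine Finset.sum_congr rfl (fun m hm => ?_)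
  have hm3 : 3 * m ≤ n := by
    have := Finset.mem_range.1 hm
    have h := (Nat.le_div_iff_mul_le (by norm_num : 0 < 3)).1 (by omega : m ≤ n / 3)
    omega
  -- bijection between the fiber and REP m
  refine Finset.card_bij' (fun S _ => (S.filter (fun k => 3 ∣ k)).image (fun k => k / 3))
    (fun T _ => ((n - 3 * m).bitIndices.toFinset.image (2 ^ ·)) ∪ (T.image (fun t => 3 * t)))
    ?_ ?_ ?_ ?_
  · -- forward maps into REP m
    intro S hS
    rw [Finset.mem_filter] at hS
    obtain ⟨hSrep, hSkey⟩ := hS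
    rw [mem_REP] at hSrep
    rw [mem_REP]
    constructor
    · intro k hk
      rw [Finset.mem_image] at hk
      obtain ⟨x, hx, rfl⟩ := hk
      rw [Finset.mem_filter] at hx
      obtain ⟨a, b, rfl⟩ := hSrep.1 x hx.1
      have hb : 1 ≤ b := by
        by_contra hb
        have : b = 0 := by omega
        exact not_three_dvd_two_pow a (by simpa [this] using hx.2)
      refine ⟨a, b - 1, ?_⟩
      have : 2 ^ a * 3 ^ b = 2 ^ a * 3 ^ (b - 1) * 3 := by
        rw [mul_assoc, ← pow_succ]; congr 2; omega
      rw [this]; omega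
    · exact hSkey
  · -- backward maps into the fiber
    intro T hT
    rw [mem_REP] at hT
    have hdisj : Disjoint ((n - 3 * m).bitIndices.toFinset.image (2 ^ ·))
        (T.image (fun t => 3 * t)) := by
      rw [Finset.disjoint_left]
      intro x hx1 hx2
      rw [Finset.mem_image] at hx1 hx2
      obtain ⟨i, _, rfl⟩ := hx1
      obtain ⟨t, _, ht⟩ := hx2
      exact not_three_dvd_two_pow i ⟨t, ht.symm⟩
    have hTid : ∑ x ∈ T, x = m := by
      rw [← hT.2]; exact Finset.sum_congr rfl (fun x _ => rfl)
    have hTsum : ((T.image (fun t => 3 * t)).sum id) = 3 * m := by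
      rw [Finset.sum_image (fun x _ y _ h => by omega)]
      simp only [id_eq]
      rw [← Finset.mul_sum, hTid]
    have hbitsum : (((n - 3 * m).bitIndices.toFinset.image (2 ^ ·)).sum id) = n - 3 * m := by
      rw [Finset.sum_image (fun x _ y _ h => Nat.pow_right_injective (le_refl 2) h)]
      simp only [id_eq]
      exact Finset.twoPowSum_toFinset_bitIndices (n - 3 * m)
    have hfilter : (((n - 3 * m).bitIndices.toFinset.image (2 ^ ·)) ∪
        (T.image (fun t => 3 * t))).filter (fun k => 3 ∣ k) = T.image (fun t => 3 * t) := by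
      rw [Finset.filter_union]
      have e1 : ((n - 3 * m).bitIndices.toFinset.image (2 ^ ·)).filter (fun k => 3 ∣ k) = ∅ := by
        rw [Finset.filter_eq_empty_iff]
        intro x hx
        rw [Finset.mem_image] at hx
        obtain ⟨i, _, rfl⟩ := hx
        exact not_three_dvd_two_pow i
      have e2 : (T.image (fun t => 3 * t)).filter (fun k => 3 ∣ k) = T.image (fun t => 3 * t) := by
        rw [Finset.filter_eq_self]
        intro x hx
        rw [Finset.mem_image] at hx
        obtain ⟨t, _, rfl⟩ := hx
        exact ⟨t, rfl⟩
      rw [e1, e2, Finset.empty_union]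
    have himg : ((T.image (fun t => 3 * t)).image (fun k => k / 3)) = T := by
      rw [Finset.image_image]
      have : T.image ((fun k => k / 3) ∘ (fun t => 3 * t)) = T.image id :=
        Finset.image_congr (fun x _ => by simp)
      rw [this, Finset.image_id]
    rw [Finset.mem_filter, mem_REP]
    refine ⟨⟨?_, ?_⟩, ?_⟩
    · intro k hk
      rw [Finset.mem_union, Finset.mem_image, Finset.mem_image] at hk
      rcases hk with ⟨i, _, rfl⟩ | ⟨t, ht, rfl⟩
      · exact ⟨i, 0, by norm_num⟩
      · obtain ⟨a, b, rfl⟩ := hT.1 t ht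
        exact ⟨a, b + 1, by ring⟩
    · rw [Finset.sum_union hdisj, hTsum, hbitsum]
      omega
    · show keyF _ = m
      unfold keyF
      rw [hfilter, himg, hT.2]
  · -- left inverse
    intro S hS
    rw [Finset.mem_filter] at hS
    obtain ⟨hSrep, hSkey⟩ := hS
    rw [mem_REP] at hSrep
    have hA : ∀ k ∈ S.filter (fun k => ¬ 3 ∣ k), ∃ a, k = 2 ^ a := by
      intro k hk
      rw [Finset.mem_filter] at hk
      exact smooth_not_dvd_pow2 (hSrep.1 k hk.1) hk.2
    have hsplit : (S.filter (fun k => ¬ 3 ∣ k)).sum id + (S.filter (fun k => 3 ∣ k)).sum id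
        = n := by
      have h := Finset.sum_filter_add_sum_filter_not S (fun k => 3 ∣ k) id
      have h2 : (S.filter (fun k => 3 ∣ k)).sum id + (S.filter (fun k => ¬ 3 ∣ k)).sum id
          = S.sum id := h
      rw [hSrep.2] at h2
      omega
    have h3m : (S.filter (fun k => 3 ∣ k)).sum id = 3 * m := by
      rw [← hkey3 S, hSkey]
    have hAsum : (S.filter (fun k => ¬ 3 ∣ k)).sum id = n - 3 * m := by omega
    have himg : (((S.filter (fun k => 3 ∣ k)).image (fun k => k / 3)).image (fun t => 3 * t))
        = S.filter (fun k => 3 ∣ k) := by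
      rw [Finset.image_image]
      have : (S.filter (fun k => 3 ∣ k)).image ((fun t => 3 * t) ∘ (fun k => k / 3))
          = (S.filter (fun k => 3 ∣ k)).image id := by
        refine Finset.image_congr (fun x hx => ?_)
        rw [Finset.coe_filter, Set.mem_setOf_eq] at hx
        simp only [Function.comp_apply, id_eq]
        exact Nat.mul_div_cancel' hx.2
      rw [this, Finset.image_id]
    have hbit : (n - 3 * m).bitIndices.toFinset.image (2 ^ ·)
        = S.filter (fun k => ¬ 3 ∣ k) := by
      rw [← hAsum]
      exact pow2_finset_eq hA
    rw [hbit, himg, Finset.union_comm, Finset.filter_union_filter_not_eq]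
  · -- right inverse
    intro T hT
    rw [mem_REP] at hT
    have hfilter : (((n - 3 * m).bitIndices.toFinset.image (2 ^ ·)) ∪
        (T.image (fun t => 3 * t))).filter (fun k => 3 ∣ k) = T.image (fun t => 3 * t) := by
      rw [Finset.filter_union]
      have e1 : ((n - 3 * m).bitIndices.toFinset.image (2 ^ ·)).filter (fun k => 3 ∣ k) = ∅ := by
        rw [Finset.filter_eq_empty_iff]
        intro x hx
        rw [Finset.mem_image] at hx
        obtain ⟨i, _, rfl⟩ := hx
        exact not_three_dvd_two_pow i
      have e2 : (T.image (fun t => 3 * t)).filter (fun k => 3 ∣ k) = T.image (fun t => 3 * t) := by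
        rw [Finset.filter_eq_self]
        intro x hx
        rw [Finset.mem_image] at hx
        obtain ⟨t, _, rfl⟩ := hx
        exact ⟨t, rfl⟩
      rw [e1, e2, Finset.empty_union]
    rw [hfilter, Finset.image_image]
    have : T.image ((fun k => k / 3) ∘ (fun t => 3 * t)) = T.image id :=
      Finset.image_congr (fun x _ => by simp)
    rw [this, Finset.image_id]

lemma REP_zero : (REP 0).card = 1 := by
  have : REP 0 = {∅} := by
    ext S
    rw [mem_REP, Finset.mem_singleton]
    constructor
    · rintro ⟨hsm, hsum⟩
      rw [Finset.eq_empty_iff_forall_notMem]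
      intro k hk
      have hk0 : k = 0 := (Finset.sum_eq_zero_iff.1 hsum) k hk
      obtain ⟨a, b, hab⟩ := hsm k hk
      have : (0:ℕ) < 2 ^ a * 3 ^ b := by positivity
      omega
    · rintro rfl
      exact ⟨by simp, by simp⟩
  rw [this, Finset.card_singleton]

lemma REP_one : (REP 1).card = 1 := by
  have h := REP_card_rec 1
  norm_num at h
  rw [h, REP_zero]

lemma REP_rec3 {k : ℕ} (hk : 1 ≤ k) :
    (REP (3 * k)).card = (REP (3 * k - 1)).card + (REP k).card := by
  rw [REP_card_rec (3 * k), REP_card_rec (3 * k - 1)]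
  have h1 : 3 * k / 3 + 1 = k + 1 := by omega
  have h2 : (3 * k - 1) / 3 + 1 = k := by omega
  rw [h1, h2, Finset.sum_range_succ]

lemma ascend {k : ℕ} (hk : 1 ≤ k) (h : Odd ((REP k).card)) :
    ∃ k', k + 1 ≤ k' ∧ Odd ((REP k').card) := by
  rcases Nat.even_or_odd ((REP (3 * k - 1)).card) with he | ho
  · exact ⟨3 * k, by omega, by rw [REP_rec3 hk]; exact he.add_odd h⟩
  · exact ⟨3 * k - 1, by omega, ho⟩

theorem stmt13 : ∀ N : ℕ, ∃ n : ℕ, N ≤ n ∧ Odd (fpq 2 3 n) := by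
  have main : ∀ N : ℕ, ∃ n, N ≤ n ∧ 1 ≤ n ∧ Odd ((REP n).card) := by
    intro N
    induction N with
    | zero => exact ⟨1, by omega, by omega, by rw [REP_one]; exact odd_one⟩
    | succ N ih =>
      obtain ⟨n, hn, hn1, hodd⟩ := ih
      obtain ⟨k', hk', hodd'⟩ := ascend hn1 hodd
      exact ⟨k', by omega, by omega, hodd'⟩
  intro N
  obtain ⟨n, hn, _, hodd⟩ := main N
  exact ⟨n, hn, by rwa [fpq_eq]⟩
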